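/- Let x = (x₁,x₂) ∈ Z² with x₁, x₂ > 0. Every contour γ surrounding {0,x} satisfies |γ∩E^h| ≥ 2(x₂+1) and |γ∩E^v| ≥ 2(x₁+1); in particular |γ| ≥ ‖x‖, and a contour γ ∈ Γ_{{0,x}} has |γ| = ‖x‖ if and only if |γ∩E^h| = 2(x₂+1) and |γ∩E^v| = 2(x₁+1). -/

import Mathlib

open MeasureTheory Filter

/-- An edge of the square lattice `ℤ × ℤ`, encoded by its lower-left endpoint `base`
together with its direction: a horizontal edge joins `base` to `base + (1,0)`,
a vertical edge joins `base` to `base + (0,1)`. This encodes exactly the set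
`𝔼` of nearest-neighbour edges of `ℤ²`. -/
structure LatticeEdge where
  base : ℤ × ℤ
  horiz : Bool
deriving DecidableEq

namespace LatticeEdge

/-- First endpoint of an edge. -/
def fst (e : LatticeEdge) : ℤ × ℤ := e.base

/-- Second endpoint of an edge. -/
def snd (e : LatticeEdge) : ℤ × ℤ :=
  if e.horiz then (e.base.1 + 1, e.base.2) else (e.base.1, e.base.2 + 1)

/-- The two endpoints of an edge, as an unordered pair. -/
def ends (e : LatticeEdge) : Sym2 (ℤ × ℤ) := s(e.fst, e.snd)

end LatticeEdge

/-- The graph on `ℤ²` whose edges are the lattice edges belonging to `S`. -/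
def graphOf (S : Set LatticeEdge) : SimpleGraph (ℤ × ℤ) where
  Adj u v := u ≠ v ∧ ∃ e ∈ S, e.ends = s(u, v)
  symm := by
    constructor
    intro u v h
    obtain ⟨hne, e, he, hs⟩ := h
    exact ⟨hne.symm, e, he, hs.trans (Sym2.eq_swap)⟩
  loopless := by
    constructor
    intro u h
    exact h.1 rfl

/-- The graph `(ℤ², 𝔼 ∖ γ)` obtained by deleting the edges of `γ`. -/
def complGraph (γ : Finset LatticeEdge) : SimpleGraph (ℤ × ℤ) :=
  graphOf {e | e ∉ γ}

/-- A finite set `γ` of lattice edges is a *contour* if the graph `(ℤ², 𝔼 ∖ γ)` has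
exactly one finite connected component, and `γ` is minimal with this property:
for every `e ∈ γ`, the graph `(ℤ², 𝔼 ∖ (γ ∖ {e}))` has no finite connected component. -/
def IsContour (γ : Finset LatticeEdge) : Prop :=
  (∃! C : (complGraph γ).ConnectedComponent, C.supp.Finite) ∧
  ∀ e ∈ γ, ∀ C : (graphOf {f | f ∉ γ ∨ f = e}).ConnectedComponent, ¬ C.supp.Finite

/-- A contour `γ` *surrounds* a set `X ⊆ ℤ²` of vertices if `X` is contained in the
vertex set `I_γ` of the (unique) finite connected component of `(ℤ², 𝔼 ∖ γ)`. -/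
def Surrounds (γ : Finset LatticeEdge) (X : Set (ℤ × ℤ)) : Prop :=
  IsContour γ ∧ ∃ C : (complGraph γ).ConnectedComponent, C.supp.Finite ∧ X ⊆ C.supp

/-- `Γ^n_X` : the set of contours of cardinality `n` surrounding `X`. -/
def GammaN (X : Set (ℤ × ℤ)) (n : ℕ) : Set (Finset LatticeEdge) :=
  {γ | Surrounds γ X ∧ γ.card = n}

/-- `‖x‖ = 2(x₁ + x₂ + 2)`, the cardinality of a minimal contour surrounding `{0, x}`. -/
def normC (x : ℤ × ℤ) : ℕ := (2 * (x.1 + x.2 + 2)).toNat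

/-- `β_x` : the number of minimal contours surrounding `{0, x}`. -/
noncomputable def betaX (x : ℤ × ℤ) : ℕ := Nat.card ↥(GammaN {0, x} (normC x))

/-- Number of horizontal edges of `γ`, i.e. `|γ ∩ 𝔼ʰ|`. -/
def hCount (γ : Finset LatticeEdge) : ℕ := (γ.filter fun e => e.horiz = true).card

/-- Number of vertical edges of `γ`, i.e. `|γ ∩ 𝔼ᵛ|`. -/
def vCount (γ : Finset LatticeEdge) : ℕ := (γ.filter fun e => e.horiz = false).card

/-- The dual edge `e*` of a lattice edge `e`.  We identify the dual lattice
`ℤ² + (1/2, 1/2)` with `ℤ²` via `(a,b) ↦ (a + 1/2, b + 1/2)`; under this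
identification the dual edge crossing the horizontal edge `(a,b)–(a+1,b)` joins
`(a, b-1)` to `(a, b)` (a vertical dual edge), and the dual edge crossing the
vertical edge `(a,b)–(a,b+1)` joins `(a-1, b)` to `(a, b)` (a horizontal dual edge). -/
def dualEdge (e : LatticeEdge) : LatticeEdge :=
  if e.horiz then ⟨(e.base.1, e.base.2 - 1), false⟩ else ⟨(e.base.1 - 1, e.base.2), true⟩

/-- A finite set `S` of (dual) lattice edges is a *circuit* if it is the edge set of a
closed self-avoiding path: there are `n ≥ 3` distinct vertices `c 0, …, c (n-1)`,
cyclically consecutive ones being joined by an edge of `S`, and every edge of `S` arising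
this way. -/
def IsCircuit (S : Finset LatticeEdge) : Prop :=
  ∃ n : ℕ, 3 ≤ n ∧ ∃ c : ZMod n → ℤ × ℤ, Function.Injective c ∧
    (∀ i : ZMod n, ∃ e ∈ S, e.ends = s(c i, c (i + 1))) ∧
    (∀ e ∈ S, ∃ i : ZMod n, e.ends = s(c i, c (i + 1)))

/-- The dual edge `e_k*` joining `(k - 1/2, -1/2)` to `(k - 1/2, 1/2)`; in our
identification of the dual lattice with `ℤ²` this is the vertical dual edge with base
`(k-1, -1)`, i.e. the dual of the horizontal edge `(k-1, 0)–(k, 0)`. -/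
def ekStar (k : ℤ) : LatticeEdge := ⟨(k - 1, -1), false⟩

/-- The probability that the edge `e` is open: `p_h` for horizontal edges and `p_v`
for vertical ones. -/
noncomputable def edgeProb (ph pv : ℝ) (e : LatticeEdge) : ℝ := if e.horiz then ph else pv

/-- `P` is the Bernoulli product measure `P_{(p_h, p_v)}` on configurations
`ω ∈ {0,1}^𝔼` (encoded as `LatticeEdge → Bool`, `true` = open): it is a probability
measure and, for every finite set of edges, the states of those edges are independent
Bernoulli variables with the correct parameters.  These cylinder probabilities
characterize the product measure uniquely. -/
def IsBernoulliProduct (ph pv : ℝ) (P : Measure (LatticeEdge → Bool)) : Prop :=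
  IsProbabilityMeasure P ∧
    ∀ (F : Finset LatticeEdge) (σ : LatticeEdge → Bool),
      P {ω | ∀ e ∈ F, ω e = σ e} =
        ∏ e ∈ F, ENNReal.ofReal
          (if σ e then edgeProb ph pv e else 1 - edgeProb ph pv e)

/-- The graph of open edges of the configuration `ω`. -/
def openGraph (ω : LatticeEdge → Bool) : SimpleGraph (ℤ × ℤ) :=
  graphOf {e | ω e = true}

/-- `x` and `y` belong to the same finite open cluster of the configuration `ω`. -/
def SameFiniteCluster (ω : LatticeEdge → Bool) (x y : ℤ × ℤ) : Prop :=
  ∃ C : (openGraph ω).ConnectedComponent, x ∈ C.supp ∧ y ∈ C.supp ∧ C.supp.Finite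

/-- The truncated (finite) connectivity `τ^f_p(x,y)`: the probability that `x` and `y`
belong to the same finite open cluster. -/
noncomputable def tauF (P : Measure (LatticeEdge → Bool)) (x y : ℤ × ℤ) : ℝ :=
  (P {ω | SameFiniteCluster ω x y}).toReal

/-- The box `V_N = ([-N,N] × [-N,N]) ∩ ℤ²`. -/
def VN (N : ℕ) : Set (ℤ × ℤ) := {v | |v.1| ≤ (N : ℤ) ∧ |v.2| ≤ (N : ℤ)}

/-- The interior vertex boundary `∂_v^int V_N = {x ∈ V_N : d(x, ℤ² ∖ V_N) = 1}`. -/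
def intBdry (N : ℕ) : Set (ℤ × ℤ) :=
  {v | (|v.1| ≤ (N : ℤ) ∧ |v.2| ≤ (N : ℤ)) ∧ (|v.1| = (N : ℤ) ∨ |v.2| = (N : ℤ))}

/-- `e ∈ E_N`: both endpoints of `e` lie in `V_N`. -/
def edgeInBox (N : ℕ) (e : LatticeEdge) : Prop := e.fst ∈ VN N ∧ e.snd ∈ VN N

/-- The graph on `(V_N, open edges of E_N)` (vertices outside `V_N` are isolated). -/
def openGraphN (N : ℕ) (ω : LatticeEdge → Bool) : SimpleGraph (ℤ × ℤ) :=
  graphOf {e | edgeInBox N e ∧ ω e = true}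

/-- The finite-volume event defining `τ^{f,N}_p(x,y)`: there is an open cluster `A` of
`(V_N, open edges of E_N)` with `{x,y} ⊆ V_A` and `V_A ∩ ∂_v^int V_N = ∅`. -/
def FiniteVolEvent (N : ℕ) (x y : ℤ × ℤ) (ω : LatticeEdge → Bool) : Prop :=
  ∃ C : (openGraphN N ω).ConnectedComponent,
    x ∈ C.supp ∧ y ∈ C.supp ∧ C.supp ∩ intBdry N = ∅

/-- The finite-volume finite connectivity `τ^{f,N}_p(x,y)`. -/
noncomputable def tauFN (P : Measure (LatticeEdge → Bool)) (N : ℕ) (x y : ℤ × ℤ) : ℝ :=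
  (P {ω | FiniteVolEvent N x y ω}).toReal

/-- `λ = (1-p)/p`. -/
noncomputable def lam (p : ℝ) : ℝ := (1 - p) / p

/-- The threshold `η̃(p_h, x₁, x₂)` from the paper. -/
noncomputable def etaTilde (ph : ℝ) (x1 x2 : ℤ) : ℝ :=
  ((betaX (x1, x2) : ℝ) * ph ^ (4 * (x1 + x2 + 2)) /
      ((4 ^ 3 * lam ph) ^ (x1 + x2 + 3) / (1 - 4 ^ 3 * lam ph) +
        (betaX (x1, x2) : ℝ) * (1 + 12 * lam ph) ^ (2 * (x1 + x2 + 2)))) ^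
    (1 / (2 * ((x2 : ℝ) - (x1 : ℝ))))

namespace ContourProof

open SimpleGraph

lemma fst_ne_snd (e : LatticeEdge) : e.fst ≠ e.snd := by
  unfold LatticeEdge.fst LatticeEdge.snd
  cases e.horiz <;> simp [Prod.ext_iff]

lemma adj_coords {S : Set LatticeEdge} {a b : ℤ × ℤ} (h : (graphOf S).Adj a b) :
    |b.1 - a.1| ≤ 1 ∧ |b.2 - a.2| ≤ 1 := by
  obtain ⟨hne, e, he, hs⟩ := h
  unfold LatticeEdge.ends at hs
  rw [Sym2.eq_iff] at hs
  rcases hs with ⟨h1, h2⟩ | ⟨h1, h2⟩ <;>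
  · subst h1; subst h2
    unfold LatticeEdge.fst LatticeEdge.snd
    cases e.horiz <;> simp <;> omega

lemma supp_adj_closed {γ : Finset LatticeEdge} {C : (complGraph γ).ConnectedComponent}
    {v w : ℤ × ℤ} (hv : v ∈ C.supp) (h : (complGraph γ).Adj v w) : w ∈ C.supp := by
  rw [SimpleGraph.ConnectedComponent.mem_supp_iff] at hv ⊢
  rw [← hv]
  exact (SimpleGraph.ConnectedComponent.connectedComponentMk_eq_of_adj h).symm

lemma cross_mem {γ : Finset LatticeEdge} {C : (complGraph γ).ConnectedComponent}
    {e : LatticeEdge} (h1 : e.fst ∈ C.supp) (h2 : e.snd ∉ C.supp) : e ∈ γ := by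
  by_contra he
  exact h2 (supp_adj_closed h1 ⟨fst_ne_snd e, e, he, rfl⟩)

lemma cross_mem' {γ : Finset LatticeEdge} {C : (complGraph γ).ConnectedComponent}
    {e : LatticeEdge} (h1 : e.snd ∈ C.supp) (h2 : e.fst ∉ C.supp) : e ∈ γ := by
  by_contra he
  exact h2 (supp_adj_closed h1 ⟨(fst_ne_snd e).symm, e, he, Sym2.eq_swap⟩)

/-- Finite nonempty set of integers: a max element. -/
lemma vert_edges {γ : Finset LatticeEdge} {C : (complGraph γ).ConnectedComponent}
    (hfin : C.supp.Finite) {v : ℤ × ℤ} (hv : v ∈ C.supp) :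
    ∃ b1 b2 : ℤ, b1 < v.2 ∧ v.2 ≤ b2 ∧
      (⟨(v.1, b1), false⟩ : LatticeEdge) ∈ γ ∧ (⟨(v.1, b2), false⟩ : LatticeEdge) ∈ γ := by
  have hS : {b : ℤ | (v.1, b) ∈ C.supp}.Finite := by
    apply Set.Finite.preimage _ hfin
    intro a _ b _ h
    exact (Prod.mk.injEq _ _ _ _ ▸ h).2
  set T := hS.toFinset with hT
  have hvT : v.2 ∈ T := hS.mem_toFinset.2 hv
  have hne : T.Nonempty := ⟨v.2, hvT⟩
  refine ⟨T.min' hne - 1, T.max' hne, ?_, T.le_max' _ hvT, ?_, ?_⟩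
  · have := T.min'_le _ hvT; omega
  · apply cross_mem' (C := C)
    · show (v.1, T.min' hne - 1 + 1) ∈ C.supp
      have h5 : T.min' hne ∈ T := T.min'_mem hne
      have := hS.mem_toFinset.1 h5
      simpa using this
    · show (v.1, T.min' hne - 1) ∈ C.supp → False
      intro h
      have h5 : T.min' hne - 1 ∈ T := hS.mem_toFinset.2 h
      have := T.min'_le _ h5; omega
  · apply cross_mem (C := C)
    · show (v.1, T.max' hne) ∈ C.supp
      exact hS.mem_toFinset.1 (T.max'_mem hne)
    · show (v.1, T.max' hne + 1) ∈ C.supp → False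
      intro h
      have h5 : T.max' hne + 1 ∈ T := hS.mem_toFinset.2 h
      have := T.le_max' _ h5; omega

lemma horiz_edges {γ : Finset LatticeEdge} {C : (complGraph γ).ConnectedComponent}
    (hfin : C.supp.Finite) {v : ℤ × ℤ} (hv : v ∈ C.supp) :
    ∃ a1 a2 : ℤ, a1 < v.1 ∧ v.1 ≤ a2 ∧
      (⟨(a1, v.2), true⟩ : LatticeEdge) ∈ γ ∧ (⟨(a2, v.2), true⟩ : LatticeEdge) ∈ γ := by
  have hS : {a : ℤ | (a, v.2) ∈ C.supp}.Finite := by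
    apply Set.Finite.preimage _ hfin
    intro a _ b _ h
    exact (Prod.mk.injEq _ _ _ _ ▸ h).1
  set T := hS.toFinset with hT
  have hvT : v.1 ∈ T := hS.mem_toFinset.2 hv
  have hne : T.Nonempty := ⟨v.1, hvT⟩
  refine ⟨T.min' hne - 1, T.max' hne, ?_, T.le_max' _ hvT, ?_, ?_⟩
  · have := T.min'_le _ hvT; omega
  · apply cross_mem' (C := C)
    · show (T.min' hne - 1 + 1, v.2) ∈ C.supp
      have h5 : T.min' hne ∈ T := T.min'_mem hne
      have := hS.mem_toFinset.1 h5
      simpa using this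
    · show (T.min' hne - 1, v.2) ∈ C.supp → False
      intro h
      have h5 : T.min' hne - 1 ∈ T := hS.mem_toFinset.2 h
      have := T.min'_le _ h5; omega
  · apply cross_mem (C := C)
    · show (T.max' hne, v.2) ∈ C.supp
      exact hS.mem_toFinset.1 (T.max'_mem hne)
    · show (T.max' hne + 1, v.2) ∈ C.supp → False
      intro h
      have h5 : T.max' hne + 1 ∈ T := hS.mem_toFinset.2 h
      have := T.le_max' _ h5; omega

/-- Discrete intermediate value theorem along a walk. -/
lemma walk_ivt {S : Set LatticeEdge} (f : ℤ × ℤ → ℤ)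
    (hf : ∀ a b : ℤ × ℤ, (graphOf S).Adj a b → |f b - f a| ≤ 1) :
    ∀ {u v : ℤ × ℤ} (w : (graphOf S).Walk u v) (t : ℤ),
      f u ≤ t → t ≤ f v → ∃ p ∈ w.support, f p = t := by
  intro u v w
  induction w with
  | nil => intro t h1 h2; exact ⟨_, by simp, le_antisymm h1 h2⟩
  | cons h w ih =>
    rename_i a b c
    intro t h1 h2
    by_cases hb : f b ≤ t
    · obtain ⟨p, hp, hp2⟩ := ih t hb h2
      exact ⟨p, by simp [hp], hp2⟩
    · have hab := abs_le.1 (hf _ _ h)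
      have : f a = t := by omega
      exact ⟨a, by simp, this⟩

lemma ivt_supp {γ : Finset LatticeEdge} {C : (complGraph γ).ConnectedComponent}
    {u v : ℤ × ℤ} (hu : u ∈ C.supp) (hv : v ∈ C.supp) (f : ℤ × ℤ → ℤ)
    (hf : ∀ a b : ℤ × ℤ, (complGraph γ).Adj a b → |f b - f a| ≤ 1)
    (t : ℤ) (h1 : f u ≤ t) (h2 : t ≤ f v) : ∃ p ∈ C.supp, f p = t := by
  rw [SimpleGraph.ConnectedComponent.mem_supp_iff] at hu hv
  have hreach : (complGraph γ).Reachable u v := by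
    rw [← SimpleGraph.ConnectedComponent.eq]; rw [hu, hv]
  obtain ⟨w⟩ := hreach
  obtain ⟨p, hp, hpt⟩ := walk_ivt f hf w t h1 h2
  refine ⟨p, ?_, hpt⟩
  rw [SimpleGraph.ConnectedComponent.mem_supp_iff, ← hu]
  exact (SimpleGraph.ConnectedComponent.sound (w.takeUntil p hp).reachable).symm

lemma count_ge (s : Finset LatticeEdge) (g : LatticeEdge → ℤ) (n : ℤ) (hn : 0 ≤ n)
    (h : ∀ a : ℤ, 0 ≤ a → a ≤ n → ∃ e1 e2 : LatticeEdge,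
      e1 ∈ s ∧ e2 ∈ s ∧ e1 ≠ e2 ∧ g e1 = a ∧ g e2 = a) :
    2 * (n + 1) ≤ (s.card : ℤ) := by
  have key : ((Finset.Icc 0 n).biUnion fun a => s.filter fun e => g e = a) ⊆ s :=
    fun e he => by
      obtain ⟨a, _, he2⟩ := Finset.mem_biUnion.1 he
      exact (Finset.mem_filter.1 he2).1
  have hdisj : ∀ a ∈ Finset.Icc (0:ℤ) n, ∀ b ∈ Finset.Icc (0:ℤ) n, a ≠ b →
      Disjoint (s.filter fun e => g e = a) (s.filter fun e => g e = b) := by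
    intro a _ b _ hab
    rw [Finset.disjoint_left]
    intro e he1 he2
    rw [Finset.mem_filter] at he1 he2
    exact hab (he1.2.symm.trans he2.2)
  have hcard := Finset.card_biUnion hdisj
  have hsum : ∀ a ∈ Finset.Icc (0:ℤ) n, 2 ≤ (s.filter fun e => g e = a).card := by
    intro a ha
    rw [Finset.mem_Icc] at ha
    obtain ⟨e1, e2, h1, h2, hne, g1, g2⟩ := h a ha.1 ha.2
    exact Finset.one_lt_card.2 ⟨e1, Finset.mem_filter.2 ⟨h1, g1⟩, e2, Finset.mem_filter.2 ⟨h2, g2⟩, hne⟩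
  have h1 : 2 * (Finset.Icc (0:ℤ) n).card ≤
      ((Finset.Icc 0 n).biUnion fun a => s.filter fun e => g e = a).card := by
    rw [hcard]
    calc 2 * (Finset.Icc (0:ℤ) n).card = ∑ _a ∈ Finset.Icc (0:ℤ) n, 2 := by
          rw [Finset.sum_const, smul_eq_mul, mul_comm]
      _ ≤ _ := Finset.sum_le_sum hsum
  have h2 := Finset.card_le_card key
  have h3 : (Finset.Icc (0:ℤ) n).card = (n + 1).toNat := by
    rw [Int.card_Icc]; omega
  omega

end ContourProof

/-- For `x = (x₁,x₂)` with `x₁, x₂ > 0`, every contour `γ`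
surrounding `{0,x}` has at least `2(x₂+1)` horizontal and at least `2(x₁+1)` vertical
edges; in particular `|γ| ≥ ‖x‖`, with equality iff `|γ ∩ Eʰ| = 2(x₂+1)` and
`|γ ∩ Eᵛ| = 2(x₁+1)`. -/
theorem contour_edge_counts (x1 x2 : ℤ) (h1 : 0 < x1) (h2 : 0 < x2)
    (γ : Finset LatticeEdge) (hγ : Surrounds γ {0, (x1, x2)}) :
    (2 * (x2 + 1) ≤ (hCount γ : ℤ) ∧ 2 * (x1 + 1) ≤ (vCount γ : ℤ)) ∧
    normC (x1, x2) ≤ γ.card ∧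
    (γ.card = normC (x1, x2) ↔
      ((hCount γ : ℤ) = 2 * (x2 + 1) ∧ (vCount γ : ℤ) = 2 * (x1 + 1))) := by
  obtain ⟨_, C, hfin, hsub⟩ := hγ
  have h0 : ((0 : ℤ × ℤ)) ∈ C.supp := hsub (by simp)
  have hx : (((x1, x2)) : ℤ × ℤ) ∈ C.supp := hsub (by simp)
  have hadj : ∀ a b : ℤ × ℤ, (complGraph γ).Adj a b → |b.1 - a.1| ≤ 1 ∧ |b.2 - a.2| ≤ 1 :=
    fun a b hab => ContourProof.adj_coords hab
  have hvert : 2 * (x1 + 1) ≤ (vCount γ : ℤ) := by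
    apply ContourProof.count_ge _ (fun e => e.base.1) x1 h1.le
    intro a ha0 ha1
    obtain ⟨p, hp, hpa⟩ := ContourProof.ivt_supp h0 hx (fun v => v.1)
      (fun a b hab => (hadj a b hab).1) a (by simpa using ha0) (by simpa using ha1)
    obtain ⟨b1, b2, hb1, hb2, he1, he2⟩ := ContourProof.vert_edges hfin hp
    refine ⟨⟨(p.1, b1), false⟩, ⟨(p.1, b2), false⟩,
      Finset.mem_filter.2 ⟨he1, rfl⟩, Finset.mem_filter.2 ⟨he2, rfl⟩, ?_,
      by simpa using hpa, by simpa using hpa⟩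
    intro h
    have := congrArg (fun e : LatticeEdge => e.base.2) h
    simp only at this
    omega
  have hhor : 2 * (x2 + 1) ≤ (hCount γ : ℤ) := by
    apply ContourProof.count_ge _ (fun e => e.base.2) x2 h2.le
    intro a ha0 ha1
    obtain ⟨p, hp, hpa⟩ := ContourProof.ivt_supp h0 hx (fun v => v.2)
      (fun a b hab => (hadj a b hab).2) a (by simpa using ha0) (by simpa using ha1)
    obtain ⟨a1, a2, hb1, hb2, he1, he2⟩ := ContourProof.horiz_edges hfin hp
    refine ⟨⟨(a1, p.2), true⟩, ⟨(a2, p.2), true⟩,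
      Finset.mem_filter.2 ⟨he1, rfl⟩, Finset.mem_filter.2 ⟨he2, rfl⟩, ?_,
      by simpa using hpa, by simpa using hpa⟩
    intro h
    have := congrArg (fun e : LatticeEdge => e.base.1) h
    simp only at this
    omega
  have hsplit : hCount γ + vCount γ = γ.card := by
    have h := Finset.card_filter_add_card_filter_not (s := γ) (p := fun e => e.horiz = true)
    unfold hCount vCount
    rw [← h]
    congr 1
    simp only [Bool.not_eq_true]
  have hnorm : normC (x1, x2) = (2 * (x1 + x2 + 2)).toNat := rfl
  refine ⟨⟨hhor, hvert⟩, ?_, ?_⟩ <;> omega
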